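/- For any two random variables X and S on a common probability space with continuous marginal distribution function F_X for X, and any prudence level p in (0,1), the conditional expectation E[X | S > VaR_p(S)] is at most ES_p(X) = E[X | X > VaR_p(X)]. -/

import Mathlib

open MeasureTheory Filter Topology

/-- Value-at-Risk: the `p`-quantile of `X` under `μ`. -/
noncomputable def VaR {Ω : Type*} [MeasurableSpace Ω] (μ : Measure Ω) (X : Ω → ℝ) (p : ℝ) : ℝ :=
  sInf {x : ℝ | p ≤ (μ {ω | X ω ≤ x}).toReal}

/-- Conditional expectation of `X` given an event `A`. -/
noncomputable def condExpEvent {Ω : Type*} [MeasurableSpace Ω] (μ : Measure Ω) (X : Ω → ℝ)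
    (A : Set Ω) : ℝ :=
  (∫ ω in A, X ω ∂μ) / (μ A).toReal

lemma cdf_VaR_eq {Ω : Type*} [MeasurableSpace Ω] (μ : Measure Ω) [IsProbabilityMeasure μ]
    (X : Ω → ℝ) (hX : Measurable X)
    (hcont : Continuous fun x : ℝ => (μ {ω | X ω ≤ x}).toReal)
    (p : ℝ) (hp : p ∈ Set.Ioo (0 : ℝ) 1) :
    (μ {ω | X ω ≤ VaR μ X p}).toReal = p := by
  set F : ℝ → ℝ := fun x => (μ {ω | X ω ≤ x}).toReal with hFdef
  set T : Set ℝ := {x : ℝ | p ≤ F x} with hTdef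
  have hmonoF : Monotone F := fun a b hab =>
    ENNReal.toReal_mono (measure_ne_top _ _) (measure_mono (fun ω h => le_trans h hab))
  -- T is nonempty
  have hUnion : (⋃ n : ℕ, {ω | X ω ≤ (n : ℝ)}) = Set.univ := by
    ext ω; simp only [Set.mem_iUnion, Set.mem_univ, iff_true, Set.mem_setOf_eq]
    obtain ⟨n, hn⟩ := exists_nat_ge (X ω); exact ⟨n, hn⟩
  have htop : Tendsto (fun n : ℕ => F n) atTop (𝓝 1) := by
    have h1 : Tendsto (fun n : ℕ => μ {ω | X ω ≤ (n : ℝ)}) atTop (𝓝 (μ Set.univ)) := by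
      have := tendsto_measure_iUnion_atTop (μ := μ)
        (s := fun n : ℕ => {ω | X ω ≤ (n : ℝ)}) (by
          intro a b hab ω h
          simp only [Set.mem_setOf_eq] at h ⊢
          exact le_trans h (by exact_mod_cast hab))
      rwa [hUnion] at this
    rw [measure_univ] at h1
    have := (ENNReal.tendsto_toReal (a := 1) (by norm_num)).comp h1
    simpa [Function.comp_def, hFdef] using this
  have hTne : T.Nonempty := by
    have := htop.eventually (eventually_ge_nhds hp.2)
    obtain ⟨n, hn⟩ := this.exists
    exact ⟨(n : ℝ), hn⟩
  -- T is bounded below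
  have hInter : (⋂ n : ℕ, {ω | X ω ≤ -(n : ℝ)}) = ∅ := by
    ext ω; simp only [Set.mem_iInter, Set.mem_empty_iff_false, iff_false, Set.mem_setOf_eq, not_forall]
    obtain ⟨n, hn⟩ := exists_nat_gt (-(X ω))
    exact ⟨n, by push_neg; linarith⟩
  have hbot : Tendsto (fun n : ℕ => F (-(n : ℝ))) atTop (𝓝 0) := by
    have h1 : Tendsto (fun n : ℕ => μ {ω | X ω ≤ -(n : ℝ)}) atTop (𝓝 (μ (⋂ n : ℕ, {ω | X ω ≤ -(n : ℝ)}))) :=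
      tendsto_measure_iInter_atTop
        (fun n => (hX measurableSet_Iic).nullMeasurableSet)
        (by
          intro a b hab ω h
          simp only [Set.mem_setOf_eq] at h ⊢
          exact le_trans h (neg_le_neg (by exact_mod_cast hab)))
        ⟨0, measure_ne_top _ _⟩
    rw [hInter, measure_empty] at h1
    have := (ENNReal.tendsto_toReal (a := 0) (by norm_num)).comp h1
    simpa [Function.comp_def, hFdef] using this
  obtain ⟨n0, hn0⟩ : ∃ n : ℕ, F (-(n : ℝ)) < p := (hbot.eventually (eventually_lt_nhds hp.1)).exists
  have hTbdd : BddBelow T := by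
    refine ⟨-(n0 : ℝ), fun x hx => ?_⟩
    by_contra h
    push_neg at h
    exact absurd (le_trans hx (hmonoF h.le)) (not_le.mpr hn0)
  -- T is closed
  have hTclosed : IsClosed T := (isClosed_Ici (a := p)).preimage hcont
  have hmem : VaR μ X p ∈ T := by
    have := hTclosed.csInf_mem hTne hTbdd
    exact this
  have hge : p ≤ F (VaR μ X p) := hmem
  -- the reverse inequality by left continuity
  have hle : F (VaR μ X p) ≤ p := by
    have hlt : ∀ x ∈ Set.Iio (VaR μ X p), F x ≤ p := by
      intro x hx
      by_contra h
      push_neg at h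
      exact absurd (csInf_le hTbdd h.le) (not_le.mpr hx)
    refine le_of_tendsto (f := F) (x := 𝓝[<] (VaR μ X p)) ?_ ?_
    · exact (hcont.continuousAt).continuousWithinAt
    · exact eventually_mem_nhdsWithin.mono hlt
  linarith
 
/-- E[X | S > VaR_p(S)] ≤ ES_p(X) = E[X | X > VaR_p(X)] when the CDF of X
is continuous and P(S > VaR_p(S)) = 1 - p > 0. -/
theorem mes_le_es {Ω : Type*} [MeasurableSpace Ω] (μ : Measure Ω) [IsProbabilityMeasure μ]
    (X S : Ω → ℝ) (hX : Measurable X) (hS : Measurable S)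
    (hXint : Integrable X μ)
    (hcont : Continuous fun x : ℝ => (μ {ω | X ω ≤ x}).toReal)
    (p : ℝ) (hp : p ∈ Set.Ioo (0 : ℝ) 1)
    (htail : (μ {ω | S ω > VaR μ S p}).toReal = 1 - p) :
    condExpEvent μ X {ω | S ω > VaR μ S p} ≤ condExpEvent μ X {ω | X ω > VaR μ X p} := by
  set q := VaR μ X p with hq
  set A := {ω | S ω > VaR μ S p} with hA
  set B := {ω | X ω > q} with hB
  have hFq : (μ {ω | X ω ≤ q}).toReal = p := cdf_VaR_eq μ X hX hcont p hp
  have hBmeas : MeasurableSet B := measurableSet_lt measurable_const hX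
  have hAmeas : MeasurableSet A := measurableSet_lt measurable_const hS
  have hBcompl : B = {ω | X ω ≤ q}ᶜ := by
    ext ω; simp [hB, not_le]
  have hBval : (μ B).toReal = 1 - p := by
    rw [hBcompl, measure_compl (measurableSet_le hX measurable_const) (measure_ne_top _ _),
      measure_univ, ENNReal.toReal_sub_of_le prob_le_one (by simp), hFq]
    simp
  -- key integral inequality
  have hABeq : (μ (A \ B)).toReal = (μ (B \ A)).toReal := by
    have h1 : μ (A ∩ B) + μ (A \ B) = μ A := measure_inter_add_diff A hBmeas
    have h2 : μ (B ∩ A) + μ (B \ A) = μ B := measure_inter_add_diff B hAmeas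
    have hμAB : μ A = μ B := by
      have : (μ A).toReal = (μ B).toReal := by rw [htail, hBval]
      exact (ENNReal.toReal_eq_toReal_iff' (measure_ne_top _ _) (measure_ne_top _ _)).mp this
    rw [Set.inter_comm B A, ← hμAB, ← h1] at h2
    have h3 : μ (A \ B) = μ (B \ A) :=
      (ENNReal.add_right_inj (measure_ne_top _ _)).mp h2.symm
    rw [h3]
  have hIntAB : IntegrableOn X (A \ B) μ := hXint.integrableOn
  have hIntBA : IntegrableOn X (B \ A) μ := hXint.integrableOn
  have h1 : ∫ ω in A \ B, X ω ∂μ ≤ (μ (A \ B)).toReal * q := by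
    have hle : ∀ ω ∈ A \ B, X ω ≤ q := fun ω h => not_lt.mp h.2
    calc ∫ ω in A \ B, X ω ∂μ ≤ ∫ _ in A \ B, q ∂μ :=
          setIntegral_mono_on hIntAB (integrableOn_const (measure_ne_top _ _))
            (hAmeas.diff hBmeas) hle
      _ = (μ (A \ B)).toReal * q := by rw [setIntegral_const, smul_eq_mul]; rfl
  have h2 : (μ (B \ A)).toReal * q ≤ ∫ ω in B \ A, X ω ∂μ := by
    have hle : ∀ ω ∈ B \ A, q ≤ X ω := fun ω h => le_of_lt h.1
    calc (μ (B \ A)).toReal * q = ∫ _ in B \ A, q ∂μ := by rw [setIntegral_const, smul_eq_mul]; rfl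
      _ ≤ ∫ ω in B \ A, X ω ∂μ :=
          setIntegral_mono_on (integrableOn_const (measure_ne_top _ _)) hIntBA
            (hBmeas.diff hAmeas) hle
  have hsplitA : ∫ ω in A ∩ B, X ω ∂μ + ∫ ω in A \ B, X ω ∂μ = ∫ ω in A, X ω ∂μ :=
    integral_inter_add_diff hBmeas hXint.integrableOn
  have hsplitB : ∫ ω in B ∩ A, X ω ∂μ + ∫ ω in B \ A, X ω ∂μ = ∫ ω in B, X ω ∂μ :=
    integral_inter_add_diff hAmeas hXint.integrableOn
  have hint : ∫ ω in A, X ω ∂μ ≤ ∫ ω in B, X ω ∂μ := by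
    rw [← hsplitA, ← hsplitB, Set.inter_comm B A]
    rw [hABeq] at h1
    linarith [h1, h2]
  -- conclude
  unfold condExpEvent
  rw [htail, hBval]
  have hpos : 0 < 1 - p := by linarith [hp.2]
  gcongr
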